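/- arXiv:1212.4922 — 4 statements merged into one kernel-verified Lean document; each statement's English description precedes it below -/
import Mathlib

section
/- Let L₀ = Z_p⁴ with the standard symplectic pairing, and let x, y, z, w ∈ L₀ satisfy ⟨x,z⟩ = ⟨y,w⟩ = 1 and ⟨x,y⟩ = ⟨x,w⟩ = ⟨y,z⟩ = ⟨z,w⟩ = 0. Let x', y', z', w' ∈ L₀ with x ≡ x', y ≡ y', z ≡ z', w ≡ w' mod p^m L₀ satisfying the same pairing relations. Then there exists g ∈ GSp₄(Z_p) with g ≡ 1 mod p^m (acting trivially on L₀/p^m L₀) such that g x = x', g y = y', g z = z', g w = w'. -/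
open Matrix


/-- The standard symplectic pairing on `L₀ = ℤ_p⁴` (0-indexed). -/
noncomputable def sp4 (p : ℕ) [Fact p.Prime] (x y : Fin 4 → ℤ_[p]) : ℤ_[p] :=
  x 0 * y 3 + x 1 * y 2 - x 2 * y 1 - x 3 * y 0

section aux
variable (p : ℕ) [Fact p.Prime]

noncomputable def Jmat : Matrix (Fin 4) (Fin 4) ℤ_[p] :=
  !![0,0,0,1; 0,0,1,0; 0,-1,0,0; -1,0,0,0]

noncomputable def Gmat : Matrix (Fin 4) (Fin 4) ℤ_[p] :=
  !![0,0,1,0; 0,0,0,1; -1,0,0,0; 0,-1,0,0]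

lemma sp4_eq (u v : Fin 4 → ℤ_[p]) : sp4 p u v = u ⬝ᵥ (Jmat p).mulVec v := by
  simp [sp4, Jmat, Matrix.mulVec, dotProduct, Fin.sum_univ_four,
    Matrix.cons_val_zero, Matrix.cons_val_one, Matrix.head_cons,
    Matrix.vecHead, Matrix.vecTail]
  ring

set_option maxHeartbeats 1600000 in
lemma gram_eq (a b c d : Fin 4 → ℤ_[p])
    (h1 : sp4 p a c = 1) (h2 : sp4 p b d = 1) (h3 : sp4 p a b = 0)
    (h4 : sp4 p a d = 0) (h5 : sp4 p b c = 0) (h6 : sp4 p c d = 0) :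
    Matrix.of ![a,b,c,d] * Jmat p * (Matrix.of ![a,b,c,d])ᵀ = Gmat p := by
  simp only [sp4] at h1 h2 h3 h4 h5 h6
  have e32 : (Fin.succ 2 : Fin 4) = 3 := rfl
  ext i j
  fin_cases i <;> fin_cases j <;>
    simp [Jmat, Gmat, Matrix.mul_apply, Fin.sum_univ_four, Matrix.transpose_apply,
      Matrix.cons_val_zero, Matrix.cons_val_one, Matrix.head_cons,
      Matrix.vecHead, Matrix.vecTail, e32] <;>
    first
      | ring1
      | linear_combination h1 | linear_combination -h1
      | linear_combination h2 | linear_combination -h2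
      | linear_combination h3 | linear_combination -h3
      | linear_combination h4 | linear_combination -h4
      | linear_combination h5 | linear_combination -h5
      | linear_combination h6 | linear_combination -h6

end aux

section det
variable (p : ℕ) [Fact p.Prime]

lemma detJ : (Jmat p).det = 1 := by
  simp [Jmat, Matrix.det_succ_row_zero, Fin.sum_univ_succ, show Fin.succAbove (2 : Fin 4) (2 : Fin 3) = 3 by decide, show Fin.succAbove (3 : Fin 4) (2 : Fin 3) = 2 by decide]
  norm_num

lemma detG : (Gmat p).det = 1 := by
  simp [Gmat, Matrix.det_succ_row_zero, Fin.sum_univ_succ, show Fin.castSucc (2 : Fin 3) = (2 : Fin 4) by decide, show Fin.succAbove (2 : Fin 4) (2 : Fin 3) = 3 by decide]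

end det

/-- Given two symplectic-type quadruples `(x,y,z,w)` and `(x',y',z',w')` in `L₀ = ℤ_p⁴`
which are congruent mod `p^m L₀`, there is `g ∈ GSp₄(ℤ_p)` (an automorphism of `ℤ_p⁴`
preserving the pairing up to a unit scalar) acting trivially on `L₀/p^m L₀` and carrying
`x,y,z,w` to `x',y',z',w'`. -/
theorem exists_symplectic_automorphism_congruent_one
    (p : ℕ) [Fact p.Prime] (m : ℕ)
    (x y z w x' y' z' w' : Fin 4 → ℤ_[p])
    (hxz : sp4 p x z = 1) (hyw : sp4 p y w = 1)
    (hxy : sp4 p x y = 0) (hxw : sp4 p x w = 0) (hyz : sp4 p y z = 0) (hzw : sp4 p z w = 0)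
    (hxz' : sp4 p x' z' = 1) (hyw' : sp4 p y' w' = 1)
    (hxy' : sp4 p x' y' = 0) (hxw' : sp4 p x' w' = 0) (hyz' : sp4 p y' z' = 0)
    (hzw' : sp4 p z' w' = 0)
    (hx : ∀ i, (p : ℤ_[p]) ^ m ∣ (x i - x' i))
    (hy : ∀ i, (p : ℤ_[p]) ^ m ∣ (y i - y' i))
    (hz : ∀ i, (p : ℤ_[p]) ^ m ∣ (z i - z' i))
    (hw : ∀ i, (p : ℤ_[p]) ^ m ∣ (w i - w' i)) :
    ∃ g : (Fin 4 → ℤ_[p]) ≃ₗ[ℤ_[p]] (Fin 4 → ℤ_[p]),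
      (∃ c : ℤ_[p]ˣ, ∀ u v : Fin 4 → ℤ_[p], sp4 p (g u) (g v) = (c : ℤ_[p]) * sp4 p u v) ∧
      (∀ (v : Fin 4 → ℤ_[p]) (i : Fin 4), (p : ℤ_[p]) ^ m ∣ (g v i - v i)) ∧
      g x = x' ∧ g y = y' ∧ g z = z' ∧ g w = w' := by
  classical
  set M : Matrix (Fin 4) (Fin 4) ℤ_[p] := Matrix.of ![x, y, z, w] with hMdef
  set N : Matrix (Fin 4) (Fin 4) ℤ_[p] := Matrix.of ![x', y', z', w'] with hNdef
  have hMG : M * Jmat p * Mᵀ = Gmat p := gram_eq p x y z w hxz hyw hxy hxw hyz hzw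
  have hNG : N * Jmat p * Nᵀ = Gmat p := gram_eq p x' y' z' w' hxz' hyw' hxy' hxw' hyz' hzw'
  have hMdet : IsUnit M.det := by
    apply IsUnit.of_mul_eq_one M.det
    have h := congrArg Matrix.det hMG
    rw [Matrix.det_mul, Matrix.det_mul, detJ, detG, Matrix.det_transpose, mul_one] at h
    exact h
  have hMM : M⁻¹ * M = 1 := Matrix.nonsing_inv_mul M hMdet
  set A : Matrix (Fin 4) (Fin 4) ℤ_[p] := M⁻¹ * N with hAdef
  have hMA : M * A = N := by
    rw [hAdef, ← Matrix.mul_assoc, Matrix.mul_nonsing_inv M hMdet, Matrix.one_mul]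
  have hAJA : A * Jmat p * Aᵀ = Jmat p := by
    have htr : (M⁻¹)ᵀ = (Mᵀ)⁻¹ := (Matrix.transpose_nonsing_inv M).symm ▸ rfl
    calc A * Jmat p * Aᵀ = M⁻¹ * (N * Jmat p * Nᵀ) * (M⁻¹)ᵀ := by
          rw [hAdef, Matrix.transpose_mul]; noncomm_ring
      _ = M⁻¹ * (M * Jmat p * Mᵀ) * (M⁻¹)ᵀ := by rw [hNG, hMG]
      _ = (M⁻¹ * M) * Jmat p * (Mᵀ * (Mᵀ)⁻¹) := by rw [Matrix.transpose_nonsing_inv]; noncomm_ring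
      _ = Jmat p := by
          rw [hMM, Matrix.mul_nonsing_inv Mᵀ (by rwa [Matrix.det_transpose]),
            Matrix.one_mul, Matrix.mul_one]
  have hAdet : IsUnit A.det := by
    apply IsUnit.of_mul_eq_one A.det
    have h := congrArg Matrix.det hAJA
    rw [Matrix.det_mul, Matrix.det_mul, detJ, Matrix.det_transpose, mul_one] at h
    exact h
  have hinvA : A⁻¹ * A = 1 := Matrix.nonsing_inv_mul A hAdet
  have hAinv : A * A⁻¹ = 1 := Matrix.mul_nonsing_inv A hAdet
  refine ⟨LinearEquiv.ofLinear A.vecMulLinear (A⁻¹).vecMulLinear ?_ ?_, ?_, ?_, ?_, ?_, ?_, ?_⟩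
  · apply LinearMap.ext; intro v
    simp [Matrix.vecMulLinear_apply, Matrix.vecMul_vecMul, hinvA]
  · apply LinearMap.ext; intro v
    simp [Matrix.vecMulLinear_apply, Matrix.vecMul_vecMul, hAinv]
  · refine ⟨1, fun u v => ?_⟩
    simp only [LinearEquiv.ofLinear_apply, Matrix.vecMulLinear_apply, Units.val_one, one_mul]
    rw [sp4_eq, sp4_eq]
    have h1 : Matrix.vecMul v A = Aᵀ.mulVec v := (Matrix.mulVec_transpose A v).symm
    have h2 : A * (Jmat p * Aᵀ) = Jmat p := by rw [← Matrix.mul_assoc]; exact hAJA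
    rw [h1, Matrix.mulVec_mulVec, ← Matrix.dotProduct_mulVec, Matrix.mulVec_mulVec,
      ← Matrix.mul_assoc, hAJA]
  · -- congruence
    have hNM : ∀ (j i : Fin 4), (p : ℤ_[p]) ^ m ∣ (N j i - M j i) := by
      intro j i
      have hneg : ∀ a b : ℤ_[p], (p : ℤ_[p]) ^ m ∣ (a - b) → (p : ℤ_[p]) ^ m ∣ (b - a) := by
        intro a b h; have := dvd_neg.mpr h; rwa [neg_sub] at this
      fin_cases j
      · simpa [hMdef, hNdef] using hneg _ _ (hx i)
      · simpa [hMdef, hNdef] using hneg _ _ (hy i)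
      · simpa [hMdef, hNdef] using hneg _ _ (hz i)
      · simpa [hMdef, hNdef] using hneg _ _ (hw i)
    have hA1 : ∀ k i : Fin 4, (p : ℤ_[p]) ^ m ∣ (A k i - (1 : Matrix (Fin 4) (Fin 4) ℤ_[p]) k i) := by
      intro k i
      have hsub : A - 1 = M⁻¹ * (N - M) := by
        rw [Matrix.mul_sub, ← hAdef, hMM]
      have e : A k i - (1 : Matrix (Fin 4) (Fin 4) ℤ_[p]) k i
          = ∑ j, M⁻¹ k j * (N j i - M j i) := by
        have h := congrFun (congrFun hsub k) i
        simpa [Matrix.sub_apply, Matrix.mul_apply] using h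
      rw [e]
      exact Finset.dvd_sum fun j _ => (hNM j i).mul_left _
    intro v i
    simp only [LinearEquiv.ofLinear_apply, Matrix.vecMulLinear_apply]
    have e : Matrix.vecMul v A i - v i
        = ∑ k, v k * (A k i - (1 : Matrix (Fin 4) (Fin 4) ℤ_[p]) k i) := by
      have h1 : Matrix.vecMul v A i = ∑ k, v k * A k i := by
        simp [Matrix.vecMul, dotProduct]
      have h2 : v i = ∑ k, v k * (1 : Matrix (Fin 4) (Fin 4) ℤ_[p]) k i := by
        simp [Matrix.one_apply]
      rw [h1, h2, ← Finset.sum_sub_distrib]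
      exact Finset.sum_congr rfl fun k _ => by ring
    rw [e]
    exact Finset.dvd_sum fun k _ => (hA1 k i).mul_left _
  · simp only [LinearEquiv.ofLinear_apply, Matrix.vecMulLinear_apply]
    funext j
    have h := congrFun (congrFun hMA 0) j
    simpa [hMdef, hNdef, Matrix.mul_apply, Matrix.vecMul, dotProduct,
      Fin.sum_univ_four, Matrix.vecHead, Matrix.vecTail] using h
  · simp only [LinearEquiv.ofLinear_apply, Matrix.vecMulLinear_apply]
    funext j
    have h := congrFun (congrFun hMA 1) j
    simpa [hMdef, hNdef, Matrix.mul_apply, Matrix.vecMul, dotProduct,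
      Fin.sum_univ_four, Matrix.vecHead, Matrix.vecTail] using h
  · simp only [LinearEquiv.ofLinear_apply, Matrix.vecMulLinear_apply]
    funext j
    have h := congrFun (congrFun hMA 2) j
    simpa [hMdef, hNdef, Matrix.mul_apply, Matrix.vecMul, dotProduct,
      Fin.sum_univ_four, Matrix.vecHead, Matrix.vecTail] using h
  · simp only [LinearEquiv.ofLinear_apply, Matrix.vecMulLinear_apply]
    funext j
    have h := congrFun (congrFun hMA 3) j
    simpa [hMdef, hNdef, Matrix.mul_apply, Matrix.vecMul, dotProduct,
      Fin.sum_univ_four, Matrix.vecHead, Matrix.vecTail] using h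
end

section
/- Let L₀ = Z_p⁴ and L₁ = Z_p ⊕ Z_p ⊕ pZ_p ⊕ pZ_p with the standard symplectic pairing, so pL₀ ⊂ L₁ ⊂ L₀. Suppose x, y ∈ L₀ and z, w ∈ L₁ satisfy ⟨x,y⟩ = 0, ⟨x,z⟩ = ⟨y,w⟩ = 1, ⟨x,w⟩ = ⟨y,z⟩ = 0 and ⟨z,w⟩ = 0. Then x, y, z, w form a Z_p-basis of L₀, and px, py, z, w form a Z_p-basis of L₁. -/
/-- The Siegel-parahoric lattice `L₁ = ℤ_p ⊕ ℤ_p ⊕ pℤ_p ⊕ pℤ_p ⊆ L₀ = ℤ_p⁴`. -/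
noncomputable def L1 (p : ℕ) [Fact p.Prime] : Submodule ℤ_[p] (Fin 4 → ℤ_[p]) where
  carrier := {x | (p : ℤ_[p]) ∣ x 2 ∧ (p : ℤ_[p]) ∣ x 3}
  add_mem' := fun ha hb => ⟨dvd_add ha.1 hb.1, dvd_add ha.2 hb.2⟩
  zero_mem' := ⟨dvd_zero _, dvd_zero _⟩
  smul_mem' := fun c _ ha => ⟨ha.1.mul_left c, ha.2.mul_left c⟩

open Matrix in
set_option maxHeartbeats 2000000 in
theorem sp4_basis_L0 (p : ℕ) [Fact p.Prime]
    (x y z w : Fin 4 → ℤ_[p])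
    (hxy : sp4 p x y = 0)
    (hxz : sp4 p x z = 1) (hyw : sp4 p y w = 1)
    (hxw : sp4 p x w = 0) (hyz : sp4 p y z = 0)
    (hzw : sp4 p z w = 0) :
    ∃ B : Module.Basis (Fin 4) ℤ_[p] (Fin 4 → ℤ_[p]),
      B 0 = x ∧ B 1 = y ∧ B 2 = z ∧ B 3 = w := by
  simp only [sp4] at hxy hxz hyw hxw hyz hzw
  have hJ : (Matrix.of ![x, y, z, w]) *
      (!![0,0,0,1;0,0,1,0;0,-1,0,0;-1,0,0,0] : Matrix (Fin 4) (Fin 4) ℤ_[p]) *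
      (Matrix.of ![x, y, z, w])ᵀ
      = (!![0,0,1,0;0,0,0,1;-1,0,0,0;0,-1,0,0] : Matrix (Fin 4) (Fin 4) ℤ_[p]) := by
    ext i j
    fin_cases i <;> fin_cases j <;>
      simp only [Matrix.mul_apply, Fin.sum_univ_four, Matrix.transpose_apply, Matrix.of_apply,
        Matrix.cons_val', Matrix.cons_val_zero, Matrix.cons_val_one, Matrix.head_cons,
        Matrix.empty_val', Matrix.cons_val_fin_one, Matrix.head_fin_const, Fin.isValue,
        Fin.zero_eta, Fin.mk_one, Fin.reduceFinMk,
        Matrix.cons_val_two, Matrix.cons_val_three, Matrix.tail_cons] <;>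
      first
        | ring1
        | linear_combination hxy | linear_combination -hxy
        | linear_combination hxz | linear_combination -hxz
        | linear_combination hyw | linear_combination -hyw
        | linear_combination hxw | linear_combination -hxw
        | linear_combination hyz | linear_combination -hyz
        | linear_combination hzw | linear_combination -hzw
  have hdet : (Matrix.of ![x, y, z, w]).det * (Matrix.of ![x, y, z, w]).det = 1 := by
    have h0 := congrArg Matrix.det hJ
    rw [Matrix.det_mul, Matrix.det_mul, Matrix.det_transpose] at h0
    have h1 : (!![0,0,0,1;0,0,1,0;0,-1,0,0;-1,0,0,0] : Matrix (Fin 4) (Fin 4) ℤ_[p]).det = 1 := by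
      simp [Matrix.det_succ_row_zero, Fin.sum_univ_succ, Fin.succAbove] <;> norm_num
    have h2 : (!![0,0,1,0;0,0,0,1;-1,0,0,0;0,-1,0,0] : Matrix (Fin 4) (Fin 4) ℤ_[p]).det = 1 := by
      simp [Matrix.det_succ_row_zero, Fin.sum_univ_succ, Fin.succAbove] <;> norm_num
    rw [h1, h2] at h0
    linear_combination h0
  have hunit : IsUnit ((Matrix.of ![x, y, z, w])ᵀ).det := by
    rw [Matrix.det_transpose]; exact IsUnit.of_mul_eq_one _ hdet
  have hinv : Invertible ((Matrix.of ![x, y, z, w])ᵀ) :=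
    ((Matrix.of ![x, y, z, w])ᵀ).invertibleOfIsUnitDet hunit
  refine ⟨(Pi.basisFun ℤ_[p] (Fin 4)).map (((Matrix.of ![x, y, z, w])ᵀ).toLinearEquiv' hinv),
    ?_, ?_, ?_, ?_⟩ <;>
    · funext r
      simp [Matrix.toLinearEquiv', Matrix.mulVec_single_one, Matrix.transpose_apply,
        Matrix.vecHead, Matrix.vecTail]

/-- Suppose `x, y ∈ L₀ = ℤ_p⁴` and `z, w ∈ L₁` satisfy `⟨x,y⟩ = 0`, `⟨x,z⟩ = ⟨y,w⟩ = 1`,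
`⟨x,w⟩ = ⟨y,z⟩ = 0` and `⟨z,w⟩ = 0`.  Then `x, y, z, w` form a `ℤ_p`-basis of `L₀`,
and `px, py, z, w` form a `ℤ_p`-basis of `L₁`. -/
theorem symplectic_quadruple_basis_of_L0_and_L1
    (p : ℕ) [Fact p.Prime]
    (x y z w : Fin 4 → ℤ_[p])
    (hz : z ∈ L1 p) (hw : w ∈ L1 p)
    (hxy : sp4 p x y = 0)
    (hxz : sp4 p x z = 1) (hyw : sp4 p y w = 1)
    (hxw : sp4 p x w = 0) (hyz : sp4 p y z = 0)
    (hzw : sp4 p z w = 0) :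
    (∃ B : Module.Basis (Fin 4) ℤ_[p] (Fin 4 → ℤ_[p]),
      B 0 = x ∧ B 1 = y ∧ B 2 = z ∧ B 3 = w) ∧
    (∃ B' : Module.Basis (Fin 4) ℤ_[p] ↥(L1 p),
      (B' 0 : Fin 4 → ℤ_[p]) = (p : ℤ_[p]) • x ∧
      (B' 1 : Fin 4 → ℤ_[p]) = (p : ℤ_[p]) • y ∧
      (B' 2 : Fin 4 → ℤ_[p]) = z ∧
      (B' 3 : Fin 4 → ℤ_[p]) = w) := by
  obtain ⟨B, hB0, hB1, hB2, hB3⟩ := sp4_basis_L0 p x y z w hxy hxz hyw hxw hyz hzw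
  refine ⟨⟨B, hB0, hB1, hB2, hB3⟩, ?_⟩
  have hp0 : (p : ℤ_[p]) ≠ 0 := Nat.cast_ne_zero.mpr (Fact.out : p.Prime).ne_zero
  simp only [sp4] at hxy hxz hyw hxw hyz hzw
  have hpx : (p : ℤ_[p]) • x ∈ L1 p :=
    ⟨⟨x 2, by simp [smul_eq_mul]⟩, ⟨x 3, by simp [smul_eq_mul]⟩⟩
  have hpy : (p : ℤ_[p]) • y ∈ L1 p :=
    ⟨⟨y 2, by simp [smul_eq_mul]⟩, ⟨y 3, by simp [smul_eq_mul]⟩⟩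
  set v : Fin 4 → ↥(L1 p) := ![⟨(p : ℤ_[p]) • x, hpx⟩, ⟨(p : ℤ_[p]) • y, hpy⟩, ⟨z, hz⟩, ⟨w, hw⟩]
    with hv
  -- Linear independence
  have hli : LinearIndependent ℤ_[p] v := by
    rw [Fintype.linearIndependent_iff]
    intro g hg
    have hg' : g 0 • ((p : ℤ_[p]) • x) + g 1 • ((p : ℤ_[p]) • y) + g 2 • z + g 3 • w = 0 := by
      have := congrArg (Subtype.val) hg
      rw [Fin.sum_univ_four] at this
      simpa [hv] using this
    have key := Fintype.linearIndependent_iff.mp B.linearIndependent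
      ![(p : ℤ_[p]) * g 0, (p : ℤ_[p]) * g 1, g 2, g 3]
    have hsum : ∑ i, ![(p : ℤ_[p]) * g 0, (p : ℤ_[p]) * g 1, g 2, g 3] i • B i = 0 := by
      rw [Fin.sum_univ_four, hB0, hB1, hB2, hB3]
      funext i
      have := congrFun hg' i
      simp only [Pi.add_apply, Pi.smul_apply, smul_eq_mul, Pi.zero_apply] at this ⊢
      simp only [Matrix.cons_val_zero, Matrix.cons_val_one, Matrix.head_cons,
        Matrix.cons_val_two, Matrix.cons_val_three, Matrix.tail_cons, smul_eq_mul]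
      linear_combination this
    have hkey := key hsum
    intro i
    fin_cases i
    · have := hkey 0
      simp only [Matrix.cons_val_zero] at this
      exact (mul_eq_zero.mp this).resolve_left hp0
    · have := hkey 1
      simp only [Matrix.cons_val_one, Matrix.head_cons] at this
      exact (mul_eq_zero.mp this).resolve_left hp0
    · simpa using hkey 2
    · simpa using hkey 3
  -- Spanning
  have hsp : ⊤ ≤ Submodule.span ℤ_[p] (Set.range v) := by
    intro u _
    have hrepr := B.sum_repr (u : Fin 4 → ℤ_[p])
    rw [Fin.sum_univ_four, hB0, hB1, hB2, hB3] at hrepr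
    set a := B.repr (u : Fin 4 → ℤ_[p]) 0 with ha
    set b := B.repr (u : Fin 4 → ℤ_[p]) 1 with hb
    set c := B.repr (u : Fin 4 → ℤ_[p]) 2 with hc
    set d := B.repr (u : Fin 4 → ℤ_[p]) 3 with hd
    have hu : ∀ i, a * x i + b * y i + c * z i + d * w i = (u : Fin 4 → ℤ_[p]) i := by
      intro i
      have := congrFun hrepr i
      simpa [smul_eq_mul] using this
    obtain ⟨hu2, hu3⟩ := u.2
    have ha_eq : (u : Fin 4 → ℤ_[p]) 0 * z 3 + (u : Fin 4 → ℤ_[p]) 1 * z 2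
        - (u : Fin 4 → ℤ_[p]) 2 * z 1 - (u : Fin 4 → ℤ_[p]) 3 * z 0 = a := by
      linear_combination (-(z 3)) * hu 0 - z 2 * hu 1 + z 1 * hu 2 + z 0 * hu 3
        + a * hxz + b * hyz - d * hzw
    have hb_eq : (u : Fin 4 → ℤ_[p]) 0 * w 3 + (u : Fin 4 → ℤ_[p]) 1 * w 2
        - (u : Fin 4 → ℤ_[p]) 2 * w 1 - (u : Fin 4 → ℤ_[p]) 3 * w 0 = b := by
      linear_combination (-(w 3)) * hu 0 - w 2 * hu 1 + w 1 * hu 2 + w 0 * hu 3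
        + a * hxw + b * hyw + c * hzw
    have hdvda : (p : ℤ_[p]) ∣ a := by
      rw [← ha_eq]
      exact dvd_sub (dvd_sub (dvd_add (hz.2.mul_left _) (hz.1.mul_left _))
        (hu2.mul_right _)) (hu3.mul_right _)
    have hdvdb : (p : ℤ_[p]) ∣ b := by
      rw [← hb_eq]
      exact dvd_sub (dvd_sub (dvd_add (hw.2.mul_left _) (hw.1.mul_left _))
        (hu2.mul_right _)) (hu3.mul_right _)
    obtain ⟨a', ha'⟩ := hdvda
    obtain ⟨b', hb'⟩ := hdvdb
    have hueq : u = a' • v 0 + b' • v 1 + c • v 2 + d • v 3 := by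
      apply Subtype.ext
      funext i
      have h := hu i
      simp only [hv, Matrix.cons_val_zero, Matrix.cons_val_one, Matrix.head_cons,
        Matrix.cons_val_two, Matrix.cons_val_three, Matrix.tail_cons]
      show (u : Fin 4 → ℤ_[p]) i
        = a' * ((p : ℤ_[p]) * x i) + b' * ((p : ℤ_[p]) * y i) + c * z i + d * w i
      linear_combination -h + x i * ha' + y i * hb'
    rw [hueq]
    refine Submodule.add_mem _ (Submodule.add_mem _ (Submodule.add_mem _ ?_ ?_) ?_) ?_ <;>
      exact Submodule.smul_mem _ _ (Submodule.subset_span (Set.mem_range_self _))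
  refine ⟨Module.Basis.mk hli hsp, ?_, ?_, ?_, ?_⟩ <;>
    simp [Module.Basis.mk_apply, hv]
end

section
/- Let F be a p-adic field, G a connected reductive group over F with simply connected derived group, G' an inner form of G with inner twist ξ: G'_{F̄} ≅ G_{F̄}. Let T ⊂ G and T' ⊂ G' be elliptic maximal tori whose stable conjugacy classes correspond under the natural bijection (i.e. ξ(T'(F)) and T(F) are conjugate in G(F̄)). Then the Weyl groups W_T = N_G(T)/T and W_{T'} = N_{G'}(T')/T', viewed as finite algebraic groups over F, are isomorphic over F; in particular #W_T(F) = #W_{T'}(F). -/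
/-- Weyl groups of stably conjugate elliptic maximal tori of inner forms.

Setup: `Gbar` stands for `G(F̄)`; via the inner twist `ξ` it is also identified with
`G'(F̄)`.  `Γ` stands for `Gal(F̄/F)`; `σ` is the Galois action defining the `F`-form `G`
and `σ'` the Galois action defining the inner form `G'`, so that `σ' γ = Ad(c γ) ∘ σ γ`
for a family of elements `c γ ∈ Gbar` (inner twist relation).

`T`, `T'` are (the `F̄`-points of) elliptic maximal tori of `G` and `G'`, given as the
centralizers of regular rational elements `t`, `t'` (`t ∈ T(F)`, `t' ∈ T'(F)`), and
their stable conjugacy classes correspond: `t = h⁻¹ t' h` for some `h ∈ Gbar`.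

Conclusion: conjugation by `h` gives an isomorphism `W_{T'} ≅ W_T` defined over `F`
(it carries `T'` to `T`, normalizer to normalizer, and is Galois-equivariant modulo the
torus); in particular the sets of `F`-rational Weyl elements `W_T(F)` and `W_{T'}(F)`
(Galois-fixed cosets in `N(T)/T`, resp. `N(T')/T'`) have the same cardinality. -/
theorem weyl_groups_of_stably_conjugate_tori_isomorphic
    (Gbar Γ : Type) [Group Gbar] [Group Γ]
    (σ σ' : Γ →* MulAut Gbar)
    (c : Γ → Gbar)
    (hinner : ∀ (γ : Γ) (x : Gbar), σ' γ x = c γ * σ γ x * (c γ)⁻¹)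
    (t t' h : Gbar)
    (T T' : Subgroup Gbar)
    (hT : T = Subgroup.centralizer {t})
    (hT' : T' = Subgroup.centralizer {t'})
    (ht : ∀ γ : Γ, σ γ t = t)
    (ht' : ∀ γ : Γ, σ' γ t' = t')
    (hmatch : t = h⁻¹ * t' * h) :
    (∃ φ : Gbar ≃* Gbar,
      (∀ x : Gbar, φ x = h⁻¹ * x * h) ∧
      Subgroup.map φ.toMonoidHom T' = T ∧
      Subgroup.map φ.toMonoidHom (Subgroup.normalizer (T' : Set Gbar)) = (Subgroup.normalizer (T : Set Gbar)) ∧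
      (∀ (γ : Γ), ∀ n ∈ (Subgroup.normalizer (T' : Set Gbar)), σ γ (φ n) * (φ (σ' γ n))⁻¹ ∈ T)) ∧
    Nat.card {w : (Subgroup.normalizer (T : Set Gbar)) ⧸ T.subgroupOf (Subgroup.normalizer (T : Set Gbar)) //
        ∀ (γ : Γ) (n : (Subgroup.normalizer (T : Set Gbar))),
          (QuotientGroup.mk n : (Subgroup.normalizer (T : Set Gbar)) ⧸ T.subgroupOf (Subgroup.normalizer (T : Set Gbar))) = w →
          σ γ (n : Gbar) * (n : Gbar)⁻¹ ∈ T} =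
    Nat.card {w : (Subgroup.normalizer (T' : Set Gbar)) ⧸ T'.subgroupOf (Subgroup.normalizer (T' : Set Gbar)) //
        ∀ (γ : Γ) (n : (Subgroup.normalizer (T' : Set Gbar))),
          (QuotientGroup.mk n : (Subgroup.normalizer (T' : Set Gbar)) ⧸ T'.subgroupOf (Subgroup.normalizer (T' : Set Gbar))) = w →
          σ' γ (n : Gbar) * (n : Gbar)⁻¹ ∈ T'} := by
  -- `φ` is conjugation by `h⁻¹`
  set φ : Gbar ≃* Gbar := (MulAut.conj h⁻¹ : MulAut Gbar) with hφdef
  have hφ : ∀ x : Gbar, φ x = h⁻¹ * x * h := by intro x; simp [hφdef, mul_assoc]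
  have hφsymm : ∀ x : Gbar, φ.symm x = h * x * h⁻¹ := by
    intro x; rw [MulEquiv.symm_apply_eq, hφ]; group
  -- conjugation carries `T'` to `T` (iff form)
  have hconj : ∀ x : Gbar, x ∈ T ↔ h * x * h⁻¹ ∈ T' := by
    intro x
    rw [hT, hT', Subgroup.mem_centralizer_iff, Subgroup.mem_centralizer_iff]
    simp only [Set.mem_singleton_iff, forall_eq]
    constructor
    · intro key
      have := congrArg (fun z => h * z * h⁻¹) (hmatch ▸ key)
      simpa [mul_assoc] using this
    · intro key
      have := congrArg (fun z => h⁻¹ * z * h) key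
      rw [hmatch]
      simpa [mul_assoc] using this
  have hmapT : Subgroup.map φ.toMonoidHom T' = T := by
    ext x
    rw [Subgroup.mem_map_equiv, hconj x]
    rw [show φ.symm x = h * x * h⁻¹ from hφsymm x]
  -- Galois actions preserve the tori
  have hσT : ∀ (γ : Γ) (x : Gbar), x ∈ T → σ γ x ∈ T := by
    intro γ x hx
    rw [hT, Subgroup.mem_centralizer_iff] at hx ⊢
    simp only [Set.mem_singleton_iff, forall_eq] at hx ⊢
    have := congrArg (σ γ) hx
    simpa [map_mul, ht γ] using this
  have hσ'T' : ∀ (γ : Γ) (x : Gbar), x ∈ T' → σ' γ x ∈ T' := by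
    intro γ x hx
    rw [hT', Subgroup.mem_centralizer_iff] at hx ⊢
    simp only [Set.mem_singleton_iff, forall_eq] at hx ⊢
    have := congrArg (σ' γ) hx
    simpa [map_mul, ht' γ] using this
  have hσ'T'iff : ∀ (γ : Γ) (x : Gbar), x ∈ T' ↔ σ' γ x ∈ T' := by
    intro γ x
    refine ⟨hσ'T' γ x, fun hx => ?_⟩
    have := hσ'T' γ⁻¹ _ hx
    simpa using this
  -- `σ' γ` preserves the normalizer of `T'`
  have hσ'N : ∀ (γ : Γ) (n : Gbar), n ∈ (Subgroup.normalizer (T' : Set Gbar)) → σ' γ n ∈ (Subgroup.normalizer (T' : Set Gbar)) := by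
    intro γ n hn
    rw [Subgroup.mem_normalizer_iff] at hn ⊢
    intro x
    rw [hσ'T'iff γ⁻¹ x]
    rw [hn (σ' γ⁻¹ x), hσ'T'iff γ]
    simp [map_mul]
  -- the key cocycle computation
  have hkey : ∀ (γ : Γ) (n : Gbar), n ∈ (Subgroup.normalizer (T' : Set Gbar)) →
      σ γ (h⁻¹ * n * h) * (h⁻¹ * σ' γ n * h)⁻¹ ∈ T := by
    intro γ n hn
    -- a := c γ * σ γ h * h⁻¹ centralizes t', hence lies in T'
    have ha : c γ * σ γ h * h⁻¹ ∈ T' := by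
      rw [hT', Subgroup.mem_centralizer_iff]
      simp only [Set.mem_singleton_iff, forall_eq]
      have e1 : (σ γ h)⁻¹ * σ γ t' * σ γ h = h⁻¹ * t' * h := by
        have := ht γ
        rw [hmatch] at this
        simpa [map_mul, mul_assoc] using this
      have e2 : σ γ t' = (c γ)⁻¹ * t' * c γ := by
        have := ht' γ
        rw [hinner γ t'] at this
        have := congrArg (fun z => (c γ)⁻¹ * z * c γ) this
        simpa [mul_assoc] using this
      rw [e2] at e1
      -- e1 : (σ γ h)⁻¹ * ((c γ)⁻¹ * t' * c γ) * σ γ h = h⁻¹ * t' * h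
      have := congrArg (fun z => (c γ * σ γ h) * z * h⁻¹) e1
      simp only [mul_assoc] at this ⊢
      simpa [mul_assoc] using this
    have hb : σ' γ n * (c γ * σ γ h * h⁻¹) * (σ' γ n)⁻¹ ∈ T' := by
      have := hσ'N γ n hn
      rw [Subgroup.mem_normalizer_iff] at this
      exact (this _).mp ha
    have hprod : (c γ * σ γ h * h⁻¹)⁻¹ * (σ' γ n * (c γ * σ γ h * h⁻¹) * (σ' γ n)⁻¹) ∈ T' :=
      mul_mem (inv_mem ha) hb
    have hid : σ γ (h⁻¹ * n * h) * (h⁻¹ * σ' γ n * h)⁻¹ =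
        h⁻¹ * ((c γ * σ γ h * h⁻¹)⁻¹ * (σ' γ n * (c γ * σ γ h * h⁻¹) * (σ' γ n)⁻¹)) * h := by
      rw [hinner γ n]
      simp only [map_mul, map_inv]
      group
    rw [hid, hconj]
    simpa [mul_assoc] using hprod
  have hmapN : Subgroup.map φ.toMonoidHom (Subgroup.normalizer (T' : Set Gbar)) = (Subgroup.normalizer (T : Set Gbar)) := by
    rw [← hmapT]
    exact Subgroup.map_equiv_normalizer_eq T' φ
  refine ⟨⟨φ, hφ, hmapT, hmapN, fun γ n hn => by rw [hφ, hφ]; exact hkey γ n hn⟩, ?_⟩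
  -- reverse conjugation lemma
  have hconj' : ∀ y : Gbar, y ∈ T' ↔ h⁻¹ * y * h ∈ T := by
    intro y
    rw [hconj (h⁻¹ * y * h)]
    constructor
    · intro hy; simpa [mul_assoc] using hy
    · intro hy; simpa [mul_assoc] using hy
  -- coset-independence of the rationality condition, `T` side
  have hindepT : ∀ (n₀ n : (Subgroup.normalizer (T : Set Gbar))),
      (QuotientGroup.mk n : (Subgroup.normalizer (T : Set Gbar)) ⧸ T.subgroupOf (Subgroup.normalizer (T : Set Gbar))) = QuotientGroup.mk n₀ →
      (∀ γ, σ γ (n₀ : Gbar) * (n₀ : Gbar)⁻¹ ∈ T) →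
      ∀ γ, σ γ (n : Gbar) * (n : Gbar)⁻¹ ∈ T := by
    intro n₀ n hmk H γ
    rw [QuotientGroup.eq] at hmk
    have hτ : (n : Gbar)⁻¹ * (n₀ : Gbar) ∈ T := by
      have := Subgroup.mem_subgroupOf.mp hmk
      simpa using this
    have hx : (σ γ ((n : Gbar)⁻¹ * (n₀ : Gbar)))⁻¹ * ((n : Gbar)⁻¹ * (n₀ : Gbar)) ∈ T :=
      mul_mem (inv_mem (hσT γ _ hτ)) hτ
    have hy : (n₀ : Gbar) * ((σ γ ((n : Gbar)⁻¹ * (n₀ : Gbar)))⁻¹ *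
        ((n : Gbar)⁻¹ * (n₀ : Gbar))) * (n₀ : Gbar)⁻¹ ∈ T :=
      (Subgroup.mem_normalizer_iff.mp n₀.2 _).mp hx
    have hiden : σ γ (n : Gbar) * (n : Gbar)⁻¹ =
        (σ γ (n₀ : Gbar) * (n₀ : Gbar)⁻¹) *
        ((n₀ : Gbar) * ((σ γ ((n : Gbar)⁻¹ * (n₀ : Gbar)))⁻¹ *
          ((n : Gbar)⁻¹ * (n₀ : Gbar))) * (n₀ : Gbar)⁻¹) := by
      simp only [map_mul, map_inv]
      group
    rw [hiden]
    exact mul_mem (H γ) hy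
  -- coset-independence, `T'` side
  have hindepT' : ∀ (n₀ n : (Subgroup.normalizer (T' : Set Gbar))),
      (QuotientGroup.mk n : (Subgroup.normalizer (T' : Set Gbar)) ⧸ T'.subgroupOf (Subgroup.normalizer (T' : Set Gbar))) = QuotientGroup.mk n₀ →
      (∀ γ, σ' γ (n₀ : Gbar) * (n₀ : Gbar)⁻¹ ∈ T') →
      ∀ γ, σ' γ (n : Gbar) * (n : Gbar)⁻¹ ∈ T' := by
    intro n₀ n hmk H γ
    rw [QuotientGroup.eq] at hmk
    have hτ : (n : Gbar)⁻¹ * (n₀ : Gbar) ∈ T' := by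
      have := Subgroup.mem_subgroupOf.mp hmk
      simpa using this
    have hx : (σ' γ ((n : Gbar)⁻¹ * (n₀ : Gbar)))⁻¹ * ((n : Gbar)⁻¹ * (n₀ : Gbar)) ∈ T' :=
      mul_mem (inv_mem (hσ'T' γ _ hτ)) hτ
    have hy : (n₀ : Gbar) * ((σ' γ ((n : Gbar)⁻¹ * (n₀ : Gbar)))⁻¹ *
        ((n : Gbar)⁻¹ * (n₀ : Gbar))) * (n₀ : Gbar)⁻¹ ∈ T' :=
      (Subgroup.mem_normalizer_iff.mp n₀.2 _).mp hx
    have hiden : σ' γ (n : Gbar) * (n : Gbar)⁻¹ =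
        (σ' γ (n₀ : Gbar) * (n₀ : Gbar)⁻¹) *
        ((n₀ : Gbar) * ((σ' γ ((n : Gbar)⁻¹ * (n₀ : Gbar)))⁻¹ *
          ((n : Gbar)⁻¹ * (n₀ : Gbar))) * (n₀ : Gbar)⁻¹) := by
      simp only [map_mul, map_inv]
      group
    rw [hiden]
    exact mul_mem (H γ) hy
  -- the induced isomorphism on normalizers
  let eN : (Subgroup.normalizer (T' : Set Gbar)) ≃* (Subgroup.normalizer (T : Set Gbar)) :=
    (φ.subgroupMap (Subgroup.normalizer (T' : Set Gbar))).trans (MulEquiv.subgroupCongr hmapN)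
  have heNcoe : ∀ m : (Subgroup.normalizer (T' : Set Gbar)), ((eN m : (Subgroup.normalizer (T : Set Gbar))) : Gbar) = h⁻¹ * (m : Gbar) * h := by
    intro m
    rw [← hφ]
    rfl
  have heNsymmcoe : ∀ x : (Subgroup.normalizer (T : Set Gbar)),
      ((eN.symm x : (Subgroup.normalizer (T' : Set Gbar))) : Gbar) = h * (x : Gbar) * h⁻¹ := by
    intro x
    have h1 : (x : Gbar) = h⁻¹ * ((eN.symm x : (Subgroup.normalizer (T' : Set Gbar))) : Gbar) * h := by
      rw [← heNcoe, MulEquiv.apply_symm_apply]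
    rw [h1]
    group
  have he : (T'.subgroupOf (Subgroup.normalizer (T' : Set Gbar))).map eN.toMonoidHom = T.subgroupOf (Subgroup.normalizer (T : Set Gbar)) := by
    ext x
    rw [Subgroup.mem_map_equiv, Subgroup.mem_subgroupOf, Subgroup.mem_subgroupOf, heNsymmcoe]
    exact (hconj _).symm
  let Q : ((Subgroup.normalizer (T' : Set Gbar)) ⧸ T'.subgroupOf (Subgroup.normalizer (T' : Set Gbar))) ≃*
      ((Subgroup.normalizer (T : Set Gbar)) ⧸ T.subgroupOf (Subgroup.normalizer (T : Set Gbar))) :=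
    QuotientGroup.congr (T'.subgroupOf (Subgroup.normalizer (T' : Set Gbar))) (T.subgroupOf (Subgroup.normalizer (T : Set Gbar))) eN he
  have hQ : ∀ m : (Subgroup.normalizer (T' : Set Gbar)), Q (QuotientGroup.mk m) = QuotientGroup.mk (eN m) := by
    intro m; rfl
  have hQsymm : ∀ x : (Subgroup.normalizer (T : Set Gbar)),
      Q.symm (QuotientGroup.mk x) = QuotientGroup.mk (eN.symm x) := by
    intro x
    rw [MulEquiv.symm_apply_eq, hQ, MulEquiv.apply_symm_apply]
  -- transfer of the rationality condition through `eN`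
  have htrans : ∀ (γ : Γ) (n' : (Subgroup.normalizer (T' : Set Gbar))),
      (σ' γ (n' : Gbar) * (n' : Gbar)⁻¹ ∈ T') ↔
      (σ γ (h⁻¹ * (n' : Gbar) * h) * (h⁻¹ * (n' : Gbar) * h)⁻¹ ∈ T) := by
    intro γ n'
    have hu : σ γ (h⁻¹ * (n' : Gbar) * h) * (h⁻¹ * σ' γ (n' : Gbar) * h)⁻¹ ∈ T :=
      hkey γ (n' : Gbar) n'.2
    have hid2 : σ γ (h⁻¹ * (n' : Gbar) * h) * (h⁻¹ * (n' : Gbar) * h)⁻¹ =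
        (σ γ (h⁻¹ * (n' : Gbar) * h) * (h⁻¹ * σ' γ (n' : Gbar) * h)⁻¹) *
        (h⁻¹ * (σ' γ (n' : Gbar) * (n' : Gbar)⁻¹) * h) := by
      simp only [map_mul, map_inv]
      group
    rw [hconj' (σ' γ (n' : Gbar) * (n' : Gbar)⁻¹), hid2]
    exact (mul_mem_cancel_left hu).symm
  -- conclude via a bijection of the rational Weyl sets
  refine Nat.card_congr (Equiv.subtypeEquiv Q.symm.toEquiv ?_)
  intro w
  obtain ⟨n, rfl⟩ := QuotientGroup.mk_surjective w
  show _ ↔ ∀ (γ : Γ) (m : (Subgroup.normalizer (T' : Set Gbar))),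
      (QuotientGroup.mk m : (Subgroup.normalizer (T' : Set Gbar)) ⧸ T'.subgroupOf (Subgroup.normalizer (T' : Set Gbar))) =
        Q.symm (QuotientGroup.mk n) → σ' γ (m : Gbar) * (m : Gbar)⁻¹ ∈ T'
  rw [hQsymm n]
  constructor
  · intro H γ m hm
    refine hindepT' (eN.symm n) m hm (fun γ' => ?_) γ
    rw [htrans γ' (eN.symm n)]
    have hcoe : h⁻¹ * ((eN.symm n : (Subgroup.normalizer (T' : Set Gbar))) : Gbar) * h = (n : Gbar) := by
      rw [← heNcoe, MulEquiv.apply_symm_apply]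
    rw [hcoe]
    exact H γ' n rfl
  · intro H γ m hm
    refine hindepT n m hm (fun γ' => ?_) γ
    have hcoe : h⁻¹ * ((eN.symm n : (Subgroup.normalizer (T' : Set Gbar))) : Gbar) * h = (n : Gbar) := by
      rw [← heNcoe, MulEquiv.apply_symm_apply]
    rw [← hcoe]
    rw [← htrans γ' (eN.symm n)]
    exact H γ' (eN.symm n) rfl
end

section
/- Let N be a finite-dimensional L-vector space (L a field extension of L₀), equipped with a symplectic pairing ψ defined over L₀ on an L₀-form, a Φ-stable filtration datum as follows: let Fil ⊂ L ⊗_{L₀} N be an L-subspace with Fil^⊥ = Fil, and for Φ-stable L₀-subspaces N' ⊆ N define μ(N') = (dim_L((L⊗N')∩Fil) − (1/2)dim N')/dim N'. Suppose N₀ ⊊ N is a Φ-stable subspace which is semi-stable of maximal slope among Φ-stable subspaces (as in the Harder–Narasimhan filtration) and μ(N₀) > μ(N) = 0. Then N₀ ⊆ N₀^⊥. -/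
open scoped TensorProduct
open Module

section BaseChangeAux

variable {L₀ L N M : Type} [Field L₀] [Field L] [Algebra L₀ L]
  [AddCommGroup N] [Module L₀ N] [AddCommGroup M] [Module L₀ M]

lemma HNaux.range_baseChange (f : M →ₗ[L₀] N) :
    LinearMap.range (f.baseChange L) = (LinearMap.range f).baseChange L := by
  apply le_antisymm
  · rintro x ⟨y, rfl⟩
    induction y using TensorProduct.induction_on with
    | zero => simp
    | tmul a m =>
        rw [LinearMap.baseChange_tmul]
        exact Submodule.tmul_mem_baseChange_of_mem a ⟨m, rfl⟩
    | add x y hx hy => rw [map_add]; exact Submodule.add_mem _ hx hy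
  · rw [Submodule.baseChange_eq_span, Submodule.span_le]
    rintro x ⟨y, ⟨m, rfl⟩, rfl⟩
    exact ⟨1 ⊗ₜ m, by simp⟩

lemma HNaux.ker_baseChange (f : M →ₗ[L₀] N) :
    LinearMap.ker (f.baseChange L) = (LinearMap.ker f).baseChange L := by
  have hex : Function.Exact ((LinearMap.ker f).subtype.lTensor L) (f.lTensor L) :=
    Module.Flat.lTensor_exact L (LinearMap.exact_subtype_ker_map f)
  apply le_antisymm
  · intro x hx
    have hx' : (f.lTensor L) x = 0 := by
      have := LinearMap.mem_ker.mp hx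
      rwa [LinearMap.baseChange_eq_ltensor] at this
    obtain ⟨y, hy⟩ := (hex x).mp hx'
    have : x ∈ LinearMap.range ((LinearMap.ker f).subtype.baseChange L) := by
      refine ⟨y, ?_⟩
      have : ((LinearMap.ker f).subtype.baseChange L : L ⊗[L₀] ↥(LinearMap.ker f) → L ⊗[L₀] M) =
          (LinearMap.ker f).subtype.lTensor L := LinearMap.baseChange_eq_ltensor _
      rw [show ((LinearMap.ker f).subtype.baseChange L) y
            = ((LinearMap.ker f).subtype.lTensor L) y from congrFun this y]
      exact hy
    rwa [HNaux.range_baseChange, Submodule.range_subtype] at this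
  · rw [← Submodule.range_subtype (LinearMap.ker f), ← HNaux.range_baseChange]
    rintro x ⟨y, rfl⟩
    rw [LinearMap.mem_ker, ← LinearMap.comp_apply, ← LinearMap.baseChange_comp]
    have : f.comp (LinearMap.ker f).subtype = 0 := by
      ext z; exact z.2
    rw [this]
    simp

lemma HNaux.finrank_baseChange [FiniteDimensional L₀ N] (p : Submodule L₀ N) :
    finrank L ↥(p.baseChange L) = finrank L₀ ↥p := by
  have h := LinearMap.finrank_range_add_finrank_ker ((p.subtype).baseChange L)
  rw [HNaux.ker_baseChange, Submodule.ker_subtype, Submodule.baseChange_bot, finrank_bot,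
    HNaux.range_baseChange, Submodule.range_subtype, add_zero] at h
  rw [h, Module.finrank_baseChange]

lemma HNaux.baseChange_mono {p q : Submodule L₀ N} (h : p ≤ q) :
    p.baseChange L ≤ q.baseChange L := by
  rw [Submodule.baseChange_eq_span, Submodule.baseChange_eq_span]; exact
  Submodule.span_mono (show ((Submodule.map (TensorProduct.mk L₀ L N 1) p : Submodule L₀ _) : Set (L ⊗[L₀] N)) ⊆ ↑(Submodule.map (TensorProduct.mk L₀ L N 1) q) from Submodule.map_mono h)

lemma HNaux.baseChange_sup (p q : Submodule L₀ N) :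
    (p ⊔ q).baseChange L = p.baseChange L ⊔ q.baseChange L := by
  apply le_antisymm
  · rw [Submodule.baseChange_eq_span, Submodule.span_le]
    rintro x ⟨m, hm, rfl⟩
    obtain ⟨y, hy, z, hz, rfl⟩ := Submodule.mem_sup.mp hm
    rw [TensorProduct.mk_apply, TensorProduct.tmul_add]
    exact Submodule.add_mem _
      (Submodule.mem_sup_left (Submodule.tmul_mem_baseChange_of_mem 1 hy))
      (Submodule.mem_sup_right (Submodule.tmul_mem_baseChange_of_mem 1 hz))
  · exact sup_le (HNaux.baseChange_mono le_sup_left) (HNaux.baseChange_mono le_sup_right)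

lemma HNaux.baseChange_inf [FiniteDimensional L₀ N] (p q : Submodule L₀ N) :
    (p ⊓ q).baseChange L = p.baseChange L ⊓ q.baseChange L := by
  have hle : (p ⊓ q).baseChange L ≤ p.baseChange L ⊓ q.baseChange L :=
    le_inf (HNaux.baseChange_mono inf_le_left) (HNaux.baseChange_mono inf_le_right)
  have h1 := Submodule.finrank_sup_add_finrank_inf_eq (p.baseChange L) (q.baseChange L)
  rw [← HNaux.baseChange_sup] at h1
  have h2 := Submodule.finrank_sup_add_finrank_inf_eq p q
  have e1 := HNaux.finrank_baseChange (L := L) (p ⊔ q)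
  have e2 := HNaux.finrank_baseChange (L := L) p
  have e3 := HNaux.finrank_baseChange (L := L) q
  have e4 := HNaux.finrank_baseChange (L := L) (p ⊓ q)
  refine Submodule.eq_of_le_of_finrank_le hle ?_
  omega

end BaseChangeAux

section RankAux

variable {K U W V : Type*} [Field K] [AddCommGroup U] [Module K U]
  [AddCommGroup W] [Module K W] [AddCommGroup V] [Module K V]

lemma HNaux.finrank_range_flip [FiniteDimensional K U] [FiniteDimensional K W]
    (P : W →ₗ[K] U →ₗ[K] K) :
    finrank K (LinearMap.range P.flip) = finrank K (LinearMap.range P) := by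
  have hcomp : P.flip = P.dualMap.comp (Module.evalEquiv K U).toLinearMap := by
    ext u w; rfl
  rw [hcomp, LinearMap.range_comp, LinearEquiv.range, Submodule.map_top]
  exact LinearMap.finrank_range_dualMap_eq_finrank_range P

lemma HNaux.finrank_ker_flip [FiniteDimensional K U] [FiniteDimensional K W]
    (P : W →ₗ[K] U →ₗ[K] K) :
    finrank K (LinearMap.ker P.flip) + finrank K W
      = finrank K (LinearMap.ker P) + finrank K U := by
  have h1 := LinearMap.finrank_range_add_finrank_ker P
  have h2 := LinearMap.finrank_range_add_finrank_ker P.flip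
  have h3 := HNaux.finrank_range_flip P
  omega

/-- Core linear-algebra inequality: if `U ≤ W` is totally isotropic for `B`,
`Sl` pairs to zero (on the left) with all of `W`, and every element of `U` that is
right-orthogonal to all of `W` lies in `Sr`, then
`2·dim U + dim Sl ≤ dim W + dim (U⊓Sl) + dim (U⊓Sr)`. -/
lemma HNaux.core_ineq [FiniteDimensional K V]
    (B : V →ₗ[K] V →ₗ[K] K) (W' U' Sl Sr : Submodule K V)
    (hUW : U' ≤ W') (hSlW : Sl ≤ W')
    (hU : ∀ x ∈ U', ∀ y ∈ U', B x y = 0)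
    (hSl : ∀ x ∈ Sl, ∀ y ∈ U', B x y = 0)
    (hker : ∀ v ∈ U', (∀ w ∈ W', B w v = 0) → v ∈ Sr) :
    2 * finrank K U' + finrank K Sl
      ≤ finrank K W' + finrank K ↥(U' ⊓ Sl) + finrank K ↥(U' ⊓ Sr) := by
  set P : ↥W' →ₗ[K] ↥U' →ₗ[K] K := (B.compl₁₂ W'.subtype U'.subtype) with hP
  have h1 : finrank K (LinearMap.range P) + finrank K (LinearMap.ker P) = finrank K W' :=
    LinearMap.finrank_range_add_finrank_ker P
  have h6 : finrank K (LinearMap.range P.flip) + finrank K (LinearMap.ker P.flip)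
      = finrank K U' := LinearMap.finrank_range_add_finrank_ker P.flip
  have h7 : finrank K (LinearMap.range P.flip) = finrank K (LinearMap.range P) :=
    HNaux.finrank_range_flip P
  have h2 : Submodule.comap W'.subtype (U' ⊔ Sl) ≤ LinearMap.ker P := by
    intro x hx
    rw [LinearMap.mem_ker]
    ext u
    obtain ⟨s, hs, t, ht, hst⟩ := Submodule.mem_sup.mp (Submodule.mem_comap.mp hx)
    rw [Submodule.subtype_apply] at hst
    have hBx : B (x : V) (u : V) = 0 := by
      rw [← hst, map_add, LinearMap.add_apply, hU s hs _ u.2, hSl t ht _ u.2, add_zero]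
    simpa [hP, LinearMap.compl₁₂_apply] using hBx
  have h3 : finrank K ↥(Submodule.comap W'.subtype (U' ⊔ Sl)) = finrank K ↥(U' ⊔ Sl) :=
    (Submodule.comapSubtypeEquivOfLe (sup_le hUW hSlW)).finrank_eq
  have h2' : finrank K ↥(U' ⊔ Sl) ≤ finrank K (LinearMap.ker P) :=
    h3 ▸ Submodule.finrank_mono h2
  have h4 : LinearMap.ker P.flip ≤ Submodule.comap U'.subtype (U' ⊓ Sr) := by
    intro u hu
    rw [Submodule.mem_comap, Submodule.mem_inf]
    refine ⟨u.2, hker _ u.2 fun w hw => ?_⟩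
    have := LinearMap.congr_fun (LinearMap.mem_ker.mp hu) ⟨w, hw⟩
    simpa [hP, LinearMap.compl₁₂_apply] using this
  have h5 : finrank K ↥(Submodule.comap U'.subtype (U' ⊓ Sr)) = finrank K ↥(U' ⊓ Sr) :=
    (Submodule.comapSubtypeEquivOfLe inf_le_left).finrank_eq
  have h4' : finrank K (LinearMap.ker P.flip) ≤ finrank K ↥(U' ⊓ Sr) :=
    h5 ▸ Submodule.finrank_mono h4
  have h8 := Submodule.finrank_sup_add_finrank_inf_eq U' Sl
  omega

end RankAux

section BilinAux

variable {L₀ L N : Type} [Field L₀] [Field L] [Algebra L₀ L]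
  [AddCommGroup N] [Module L₀ N]

lemma HNaux.baseChange_vanish (ψ : N →ₗ[L₀] N →ₗ[L₀] L₀) {p q : Submodule L₀ N}
    (h : ∀ x ∈ p, ∀ y ∈ q, ψ x y = 0) :
    ∀ x ∈ p.baseChange L, ∀ y ∈ q.baseChange L,
      LinearMap.BilinForm.baseChange L ψ x y = 0 := by
  intro x hx
  rw [Submodule.baseChange_eq_span] at hx
  refine Submodule.span_induction ?_ ?_ ?_ ?_ hx
  · rintro x ⟨m, hm, rfl⟩ y hy
    rw [Submodule.baseChange_eq_span] at hy
    refine Submodule.span_induction ?_ ?_ ?_ ?_ hy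
    · rintro y ⟨m', hm', rfl⟩
      rw [TensorProduct.mk_apply, TensorProduct.mk_apply,
        LinearMap.BilinForm.baseChange_tmul, h m hm m' hm', zero_smul]
    · simp
    · intro a b _ _ ha hb; rw [map_add, ha, hb, add_zero]
    · intro c a _ ha; rw [map_smul, ha, smul_zero]
  · intro y _; simp
  · intro a b _ _ ha hb y hy; rw [map_add, LinearMap.add_apply, ha y hy, hb y hy, add_zero]
  · intro c a _ ha y hy; rw [map_smul, LinearMap.smul_apply, ha y hy, smul_zero]

lemma HNaux.ker_tmul_left (ψ : N →ₗ[L₀] N →ₗ[L₀] L₀) (x : N) :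
    LinearMap.ker (LinearMap.BilinForm.baseChange L ψ ((1 : L) ⊗ₜ[L₀] x))
      = (LinearMap.ker (ψ x)).baseChange L := by
  have hfun : LinearMap.BilinForm.baseChange L ψ ((1:L) ⊗ₜ[L₀] x)
      = (TensorProduct.AlgebraTensorModule.rid L₀ L L).toLinearMap ∘ₗ ((ψ x).baseChange L) := by
    apply LinearMap.ext
    intro v
    induction v using TensorProduct.induction_on with
    | zero => simp
    | tmul a y =>
        rw [LinearMap.comp_apply, LinearMap.baseChange_tmul,
          LinearMap.BilinForm.baseChange_tmul, LinearEquiv.coe_coe,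
          TensorProduct.AlgebraTensorModule.rid_tmul, one_mul]
    | add v w hv hw => rw [map_add, map_add, hv, hw]
  rw [hfun, LinearMap.ker_comp, LinearEquiv.ker, Submodule.comap_bot,
    HNaux.ker_baseChange]

lemma HNaux.baseChange_finsetInf [FiniteDimensional L₀ N] {ι : Type*} (s : Finset ι)
    (f : ι → Submodule L₀ N) :
    (s.inf f).baseChange L = s.inf fun i => (f i).baseChange L := by
  classical
  induction s using Finset.cons_induction with
  | empty => simp
  | cons a s ha ih => rw [Finset.inf_cons, Finset.inf_cons, HNaux.baseChange_inf, ih]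

end BilinAux

section PhiAux

variable {L₀ N : Type} [Field L₀] [AddCommGroup N] [Module L₀ N] [FiniteDimensional L₀ N]

lemma HNaux.phi_surj (σ : L₀ ≃+* L₀) (Φ : N ≃+ N)
    (hΦ : ∀ (a : L₀) (x : N), Φ (a • x) = σ a • Φ x)
    (N₀ : Submodule L₀ N) (hstab : ∀ x ∈ N₀, Φ x ∈ N₀) :
    ∀ x ∈ N₀, ∃ y ∈ N₀, Φ y = x := by
  classical
  let M₀ : Submodule L₀ N :=
    { carrier := (⇑Φ) '' ↑N₀
      add_mem' := by
        rintro _ _ ⟨a, ha, rfl⟩ ⟨b, hb, rfl⟩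
        exact ⟨a + b, N₀.add_mem ha hb, map_add _ _ _⟩
      zero_mem' := ⟨0, N₀.zero_mem, map_zero _⟩
      smul_mem' := by
        rintro c _ ⟨a, ha, rfl⟩
        exact ⟨σ.symm c • a, N₀.smul_mem _ ha, by rw [hΦ, RingEquiv.apply_symm_apply]⟩ }
  let b := Module.finBasis L₀ ↥N₀
  let w : Fin (finrank L₀ ↥N₀) → N := fun i => Φ ((b i : N))
  have hw_mem : ∀ i, w i ∈ M₀ := fun i => ⟨b i, (b i).2, rfl⟩
  have hw_mem0 : ∀ i, w i ∈ N₀ := fun i => hstab _ (b i).2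
  have hli0 : LinearIndependent L₀ (fun i => ((b i : N))) :=
    b.linearIndependent.map' N₀.subtype (Submodule.ker_subtype N₀)
  have hli : LinearIndependent L₀ w := by
    have := hli0.map_of_injective_injective (fun r : L₀ => σ.symm r) Φ.toAddMonoidHom
      (fun r hr => by simpa using congrArg σ hr)
      (fun m hm => by simpa using hm)
      (fun r m => by simp only [AddEquiv.coe_toAddMonoidHom, hΦ, RingEquiv.apply_symm_apply])
    exact this
  have hspan : Submodule.span L₀ (Set.range w) = N₀ := by
    apply Submodule.eq_of_le_of_finrank_le
    · rw [Submodule.span_le]; rintro _ ⟨i, rfl⟩; exact hw_mem0 i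
    · rw [finrank_span_eq_card hli, Fintype.card_fin]
  intro x hx
  have hle : Submodule.span L₀ (Set.range w) ≤ M₀ := by
    rw [Submodule.span_le]; rintro _ ⟨i, rfl⟩; exact hw_mem i
  obtain ⟨y, hy, rfl⟩ := hle (hspan ▸ hx)
  exact ⟨y, hy, rfl⟩

end PhiAux


/-- The slope function `μ` attached to a point `Fil` of the Lagrangian Grassmannian:
for an `L₀`-subspace `N'` of `N`,
`μ(N') = (dim_L((L⊗N')∩Fil) − (1/2)·dim N') / dim N'`. -/
noncomputable def HNslope (L₀ L N : Type) [Field L₀] [Field L] [Algebra L₀ L]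
    [AddCommGroup N] [Module L₀ N]
    (Fil : Submodule L (L ⊗[L₀] N)) (N' : Submodule L₀ N) : ℚ :=
  ((Module.finrank L ↥(N'.baseChange L ⊓ Fil) : ℚ)
      - (Module.finrank L₀ N' : ℚ) / 2) / (Module.finrank L₀ N' : ℚ)

set_option maxHeartbeats 2000000

/-- Let `(N, Φ)` be an isocrystal with polarization pairing `ψ` satisfying
`ψ(Φx,Φy) = p·σ(ψ(x,y))`, and let `Fil ∈ F(L)` be a Lagrangian point (`Fil^⊥ = Fil` for the
base-changed form).  If `N₀ ⊊ N` is a `Φ`-stable subspace which is semi-stable and of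
maximal slope among `Φ`-stable subspaces (the Harder–Narasimhan destabilizing subspace),
with `μ(N₀) > μ(N) = 0`, then `N₀ ⊆ N₀^⊥`, i.e. `ψ` vanishes on `N₀ × N₀`. -/
theorem HN_destabilizing_subspace_totally_isotropic
    (p : ℕ) (hp : p.Prime)
    (L₀ L N : Type) [Field L₀] [Field L] [Algebra L₀ L]
    [AddCommGroup N] [Module L₀ N] [FiniteDimensional L₀ N]
    (σ : L₀ ≃+* L₀)
    (Φ : N ≃+ N) (hΦ : ∀ (a : L₀) (x : N), Φ (a • x) = σ a • Φ x)
    (ψ : N →ₗ[L₀] N →ₗ[L₀] L₀)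
    (hψΦ : ∀ x y : N, ψ (Φ x) (Φ y) = (p : L₀) * σ (ψ x y))
    (Fil : Submodule L (L ⊗[L₀] N))
    (hFil : LinearMap.BilinForm.orthogonal (LinearMap.BilinForm.baseChange L ψ) Fil = Fil)
    (N₀ : Submodule L₀ N)
    (hne_bot : N₀ ≠ ⊥) (hne_top : N₀ ≠ ⊤)
    (hstab : ∀ x ∈ N₀, Φ x ∈ N₀)
    (hsemistable : ∀ N'' : Submodule L₀ N, N'' ≤ N₀ → N'' ≠ ⊥ → (∀ x ∈ N'', Φ x ∈ N'') →
      HNslope L₀ L N Fil N'' ≤ HNslope L₀ L N Fil N₀)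
    (hmax : ∀ N' : Submodule L₀ N, N₀ < N' → (∀ x ∈ N', Φ x ∈ N') →
      HNslope L₀ L N Fil N' < HNslope L₀ L N Fil N₀)
    (htotal : HNslope L₀ L N Fil ⊤ = 0)
    (hpos : 0 < HNslope L₀ L N Fil N₀) :
    ∀ x ∈ N₀, ∀ y ∈ N₀, ψ x y = 0 := by
  classical
  have hFilIso : ∀ x ∈ Fil, ∀ y ∈ Fil, LinearMap.BilinForm.baseChange L ψ x y = 0 := by
    intro x hx y hy
    rw [← hFil] at hy
    exact hy x hx
  have hsurj := HNaux.phi_surj σ Φ hΦ N₀ hstab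
  set Rr := LinearMap.BilinForm.orthogonal ψ N₀ with hRr
  set Rl := LinearMap.BilinForm.orthogonal ψ.flip N₀ with hRl
  set N₁r := N₀ ⊓ Rr with hN₁r
  set N₁l := N₀ ⊓ Rl with hN₁l
  -- Φ-stability of the two radicals
  have hstabr : ∀ x ∈ N₁r, Φ x ∈ N₁r := by
    intro x hx
    obtain ⟨hx0, hxr⟩ := Submodule.mem_inf.mp hx
    refine Submodule.mem_inf.mpr ⟨hstab x hx0, fun n hn => ?_⟩
    obtain ⟨n', hn', rfl⟩ := hsurj n hn
    show ψ (Φ n') (Φ x) = 0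
    rw [hψΦ, show ψ n' x = 0 from hxr n' hn', map_zero, mul_zero]
  have hstabl : ∀ x ∈ N₁l, Φ x ∈ N₁l := by
    intro x hx
    obtain ⟨hx0, hxl⟩ := Submodule.mem_inf.mp hx
    refine Submodule.mem_inf.mpr ⟨hstab x hx0, fun n hn => ?_⟩
    obtain ⟨n', hn', rfl⟩ := hsurj n hn
    show ψ (Φ x) (Φ n') = 0
    rw [hψΦ, show ψ x n' = 0 from hxl n' hn', map_zero, mul_zero]
  -- equality of the dimensions of the left and right radicals
  have hcl : finrank L₀ ↥N₁l = finrank L₀ ↥N₁r := by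
    set P₀ : ↥N₀ →ₗ[L₀] ↥N₀ →ₗ[L₀] L₀ := ψ.compl₁₂ N₀.subtype N₀.subtype with hP₀
    have hkerflip : LinearMap.ker P₀.flip = Submodule.comap N₀.subtype N₁r := by
      ext x
      simp only [LinearMap.mem_ker, Submodule.mem_comap, hN₁r, Submodule.mem_inf]
      constructor
      · intro h
        refine ⟨x.2, fun n hn => ?_⟩
        have := LinearMap.congr_fun h ⟨n, hn⟩
        simpa [hP₀, LinearMap.compl₁₂_apply] using this
      · intro h
        ext u
        simpa [hP₀, LinearMap.compl₁₂_apply] using h.2 (u : N) u.2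
    have hker0 : LinearMap.ker P₀ = Submodule.comap N₀.subtype N₁l := by
      ext x
      simp only [LinearMap.mem_ker, Submodule.mem_comap, hN₁l, Submodule.mem_inf]
      constructor
      · intro h
        refine ⟨x.2, fun n hn => ?_⟩
        have := LinearMap.congr_fun h ⟨n, hn⟩
        simpa [hP₀, LinearMap.compl₁₂_apply] using this
      · intro h
        ext u
        simpa [hP₀, LinearMap.compl₁₂_apply] using h.2 (u : N) u.2
    have e1 : finrank L₀ ↥(Submodule.comap N₀.subtype N₁r) = finrank L₀ ↥N₁r :=
      (Submodule.comapSubtypeEquivOfLe (inf_le_left : N₁r ≤ N₀)).finrank_eq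
    have e2 : finrank L₀ ↥(Submodule.comap N₀.subtype N₁l) = finrank L₀ ↥N₁l :=
      (Submodule.comapSubtypeEquivOfLe (inf_le_left : N₁l ≤ N₀)).finrank_eq
    have hdual := HNaux.finrank_ker_flip P₀
    rw [hkerflip, hker0, e1, e2] at hdual
    omega
  -- base-changed spaces
  haveI : FiniteDimensional L (L ⊗[L₀] N) := inferInstance
  have hSlW : N₁l.baseChange L ≤ N₀.baseChange L := HNaux.baseChange_mono inf_le_left
  have hSrW : N₁r.baseChange L ≤ N₀.baseChange L := HNaux.baseChange_mono inf_le_left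
  -- spanning family of N₀
  let b0 := Module.finBasis L₀ ↥N₀
  let e : Fin (finrank L₀ ↥N₀) → N := fun i => ↑(b0 i)
  have he_mem : ∀ i, e i ∈ N₀ := fun i => (b0 i).2
  have he_span : Submodule.span L₀ (Set.range e) = N₀ := by
    have h1 : Set.range e = N₀.subtype '' Set.range b0 := by
      rw [← Set.range_comp]; rfl
    rw [h1, ← Submodule.map_span, b0.span_eq, Submodule.map_top, Submodule.range_subtype]
  have hRr_inf : Rr = Finset.univ.inf fun i => LinearMap.ker (ψ (e i)) := by
    apply le_antisymm
    · intro x hx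
      rw [Submodule.mem_finsetInf]
      intro i _
      exact hx (e i) (he_mem i)
    · intro x hx
      rw [Submodule.mem_finsetInf] at hx
      intro n hn
      rw [← he_span] at hn
      refine Submodule.span_induction ?_ ?_ ?_ ?_ hn
      · rintro m ⟨i, rfl⟩; exact hx i (Finset.mem_univ i)
      · show ψ (0:N) x = 0
        rw [map_zero, LinearMap.zero_apply]
      · intro u' v' _ _ hu hv
        show ψ (u' + v') x = 0
        rw [map_add, LinearMap.add_apply, hu, hv, add_zero]
      · intro r u' _ hu
        show ψ (r • u') x = 0
        rw [map_smul, LinearMap.smul_apply, hu, smul_zero]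
  have hRrbc : Rr.baseChange L
      = Finset.univ.inf fun i =>
          LinearMap.ker (LinearMap.BilinForm.baseChange L ψ ((1:L) ⊗ₜ[L₀] e i)) := by
    rw [hRr_inf, HNaux.baseChange_finsetInf]
    congr 1
    funext i
    rw [HNaux.ker_tmul_left]
  have hSr_eq : N₁r.baseChange L = N₀.baseChange L ⊓ Rr.baseChange L :=
    HNaux.baseChange_inf N₀ Rr
  -- the core inequality
  have hker : ∀ v ∈ N₀.baseChange L ⊓ Fil,
      (∀ w ∈ N₀.baseChange L, LinearMap.BilinForm.baseChange L ψ w v = 0) →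
      v ∈ N₁r.baseChange L := by
    intro v hv hall
    rw [hSr_eq]
    refine Submodule.mem_inf.mpr ⟨hv.1, ?_⟩
    rw [hRrbc, Submodule.mem_finsetInf]
    intro i _
    exact LinearMap.mem_ker.mpr (hall _ (Submodule.tmul_mem_baseChange_of_mem 1 (he_mem i)))
  have hcore := HNaux.core_ineq (LinearMap.BilinForm.baseChange L ψ)
    (N₀.baseChange L) (N₀.baseChange L ⊓ Fil) (N₁l.baseChange L) (N₁r.baseChange L)
    inf_le_left hSlW
    (fun x hx y hy => hFilIso x hx.2 y hy.2)
    (fun x hx y hy => HNaux.baseChange_vanish ψ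
      (fun m hm n hn => by
        have h2 : m ∈ Rl := (Submodule.mem_inf.mp hm).2
        exact LinearMap.BilinForm.mem_orthogonal_iff.mp h2 n hn) x hx y hy.1)
    hker
  -- rewrite the dimensions
  have eUSl : (N₀.baseChange L ⊓ Fil) ⊓ N₁l.baseChange L = N₁l.baseChange L ⊓ Fil := by
    rw [inf_right_comm, inf_eq_right.mpr hSlW]
  have eUSr : (N₀.baseChange L ⊓ Fil) ⊓ N₁r.baseChange L = N₁r.baseChange L ⊓ Fil := by
    rw [inf_right_comm, inf_eq_right.mpr hSrW]
  rw [eUSl, eUSr, HNaux.finrank_baseChange N₀,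
    show finrank L ↥(N₁l.baseChange L) = finrank L₀ ↥N₁r by
      rw [HNaux.finrank_baseChange]; exact hcl] at hcore
  -- numerical setup
  set u := finrank L ↥(N₀.baseChange L ⊓ Fil) with hu_def
  set a := finrank L₀ ↥N₀ with ha_def
  set c := finrank L₀ ↥N₁r with hc_def
  set kr := finrank L ↥(N₁r.baseChange L ⊓ Fil) with hkr_def
  set kl := finrank L ↥(N₁l.baseChange L ⊓ Fil) with hkl_def
  -- hcore : 2 * u + c ≤ a + kl + kr
  have haQ : (0:ℚ) < a := by
    have ha0 : a ≠ 0 := by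
      intro h
      rw [ha_def] at h
      exact hne_bot (Submodule.finrank_eq_zero.mp h)
    positivity
  have hnum : (a:ℚ) < 2 * u := by
    simp only [HNslope] at hpos
    rw [div_pos_iff] at hpos
    rcases hpos with ⟨h1, _⟩ | ⟨_, h2⟩
    · rw [← hu_def, ← ha_def] at h1
      linarith
    · rw [← ha_def] at h2
      linarith
  -- show a ≤ c
  have hac : a ≤ c := by
    by_contra hlt
    push_neg at hlt
    by_cases hc0 : c = 0
    · have hr0 : N₁r = ⊥ := Submodule.finrank_eq_zero.mp (by rw [← hc_def]; exact hc0)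
      have hl0 : N₁l = ⊥ := Submodule.finrank_eq_zero.mp (by rw [hcl]; exact hc0)
      have hkr0 : kr = 0 := by
        rw [hkr_def, hr0, Submodule.baseChange_bot, bot_inf_eq, finrank_bot]
      have hkl0 : kl = 0 := by
        rw [hkl_def, hl0, Submodule.baseChange_bot, bot_inf_eq, finrank_bot]
      have : (a:ℕ) < 2 * u := by exact_mod_cast hnum
      omega
    · have hcQ : (0:ℚ) < c := by positivity
      have hr_ne : N₁r ≠ ⊥ := by
        intro h
        exact hc0 (by rw [hc_def, h, finrank_bot])
      have hl_ne : N₁l ≠ ⊥ := by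
        intro h
        apply hc0
        rw [← hcl, h, finrank_bot]
      have hsr := hsemistable N₁r inf_le_left hr_ne hstabr
      have hsl := hsemistable N₁l inf_le_left hl_ne hstabl
      simp only [HNslope] at hsr hsl
      rw [← hkr_def, ← hc_def, ← hu_def, ← ha_def] at hsr
      rw [← hkl_def, ← hu_def, ← ha_def, hcl] at hsl
      rw [div_le_div_iff₀ hcQ haQ] at hsr hsl
      have hmainQ : ((2 * u + c : ℕ) : ℚ) ≤ ((a + kl + kr : ℕ) : ℚ) := by
        exact_mod_cast hcore
      push_cast at hmainQ
      have h1 : ((2 * (u:ℚ) + c)) * a ≤ ((a:ℚ) + kl + kr) * a :=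
        mul_le_mul_of_nonneg_right hmainQ haQ.le
      have h2 : ((2*(u:ℚ) - a)) * a ≤ ((2*(u:ℚ) - a)) * c := by nlinarith [h1, hsr, hsl]
      have hltQ : (c:ℚ) < a := by exact_mod_cast hlt
      nlinarith [h2, hnum, hltQ]
  have hEq : N₁r = N₀ := by
    apply Submodule.eq_of_le_of_finrank_le inf_le_left
    rw [← ha_def, ← hc_def]
    exact hac
  intro x hx y hy
  have hyr : y ∈ N₁r := hEq ▸ hy
  exact (Submodule.mem_inf.mp hyr).2 x hx
end
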